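/- Define ŝ ∈ E for each 1-dimensional subspace s of V satisfying ‖ŝ‖² = [n]-1, ⟨ŝ,t̂⟩ = -1 for s ≠ t, and Σ_s ŝ = 0; for a subspace u of V set û = Σ_{s ⊆ u, dim s = 1} ŝ. Then for subspaces u, v of V with dim u = i, dim v = j, dim(u ∩ v) = h, one has ⟨û, v̂⟩ = [n][h] - [i][j]. -/

import Mathlib

open Module Finset

/-- The Gaussian number `[m] = (q^m - 1)/(q - 1)` as a real number. -/
noncomputable def gaussR (q m : ℕ) : ℝ := ((q : ℝ) ^ m - 1) / ((q : ℝ) - 1)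

/-- The vector `û ∈ E` attached to a subspace `u`: the sum of `ŝ` over all
one-dimensional subspaces `s ⊆ u`. -/
noncomputable def uhat {F V : Type*} [Field F] [AddCommGroup V] [Module F V]
    {E : Type*} [NormedAddCommGroup E] [InnerProductSpace ℝ E]
    (shat : {s : Submodule F V // Module.finrank F s = 1} → E)
    (u : Submodule F V) : E :=
  ∑ᶠ (s : {s : Submodule F V // Module.finrank F s = 1}) (_ : s.1 ≤ u), shat s

section Aux

variable {F V : Type*} [Field F] [Fintype F] [AddCommGroup V] [Module F V]
  [FiniteDimensional F V]

/-- number of nonzero vectors in a subspace -/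
lemma aux_card_ne_zero (s : Submodule F V) :
    Nat.card {x : V // x ∈ s ∧ x ≠ 0}
      = Fintype.card F ^ Module.finrank F s - 1 := by
  classical
  have : Finite V := Module.finite_of_finite F
  letI : Fintype V := Fintype.ofFinite V
  have e : {x : V // x ∈ s ∧ x ≠ 0} ≃ {y : s // y ≠ 0} :=
    { toFun := fun x => ⟨⟨x.1, x.2.1⟩, by
        simpa [Submodule.mk_eq_zero] using x.2.2⟩
      invFun := fun y => ⟨y.1.1, y.1.2, by
        intro h0
        exact y.2 (by ext; simpa using h0)⟩
      left_inv := fun x => rfl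
      right_inv := fun y => rfl }
  rw [Nat.card_congr e, Nat.card_eq_fintype_card]
  have h4 : Fintype.card {y : s // y ≠ 0}
      = Fintype.card s - Fintype.card {y : s // y = 0} := Fintype.card_subtype_compl _
  rw [h4, Fintype.card_subtype_eq (0 : s), card_eq_pow_finrank (K := F)]

lemma aux_card_lines (w : Submodule F V) :
    Nat.card {s : Submodule F V // Module.finrank F ↥s = 1 ∧ s ≤ w}
        * (Fintype.card F - 1)
      = Fintype.card F ^ Module.finrank F ↥w - 1 := by
  classical
  have : Finite V := Module.finite_of_finite F
  letI : Fintype V := Fintype.ofFinite V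
  have : Finite (Submodule F V) :=
    Finite.of_injective (fun s : Submodule F V => (s : Set V)) SetLike.coe_injective
  letI : Fintype (Submodule F V) := Fintype.ofFinite _
  set q := Fintype.card F with hq
  set S : Finset (Submodule F V) :=
    Finset.univ.filter (fun s => Module.finrank F ↥s = 1 ∧ s ≤ w) with hS
  set T : Finset V := Finset.univ.filter (fun x => x ∈ w ∧ x ≠ 0) with hT
  have hfib : ∀ x ∈ T, Submodule.span F {x} ∈ S := by
    intro x hx
    simp only [hT, mem_filter, mem_univ, true_and] at hx
    simp only [hS, mem_filter, mem_univ, true_and]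
    exact ⟨finrank_span_singleton hx.2, Submodule.span_le.2 (by simpa using hx.1)⟩
  have hcount := Finset.card_eq_sum_card_fiberwise hfib
  have hfibcard : ∀ s ∈ S, (T.filter fun x => Submodule.span F {x} = s).card = q - 1 := by
    intro s hs
    simp only [hS, mem_filter, mem_univ, true_and] at hs
    have hset : (T.filter fun x => Submodule.span F {x} = s)
        = Finset.univ.filter (fun x : V => x ∈ s ∧ x ≠ 0) := by
      ext x
      simp only [hT, mem_filter, mem_univ, true_and, and_assoc]
      constructor
      · rintro ⟨hxw, hx0, hsp⟩
        exact ⟨hsp ▸ Submodule.mem_span_singleton_self x, hx0⟩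
      · rintro ⟨hxs, hx0⟩
        refine ⟨hs.2 hxs, hx0, ?_⟩
        exact Submodule.eq_of_le_of_finrank_eq
          (Submodule.span_le.2 (by simpa using hxs))
          (by rw [finrank_span_singleton hx0, hs.1])
    rw [hset, ← Fintype.card_subtype, ← Nat.card_eq_fintype_card, aux_card_ne_zero, hs.1,
      pow_one]
  rw [Finset.sum_congr rfl hfibcard, Finset.sum_const, smul_eq_mul] at hcount
  have hTcard : T.card = q ^ Module.finrank F ↥w - 1 := by
    rw [hT, ← Fintype.card_subtype, ← Nat.card_eq_fintype_card]
    exact aux_card_ne_zero w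
  have hNS : Nat.card {s : Submodule F V // Module.finrank F ↥s = 1 ∧ s ≤ w} = S.card := by
    rw [Nat.card_eq_fintype_card, Fintype.card_subtype]
  rw [hNS, ← hcount, ← hTcard]

end Aux

theorem stmt9 {F V : Type*} [Field F] [Fintype F] [AddCommGroup V] [Module F V]
    [FiniteDimensional F V] {q n : ℕ} (hq : Fintype.card F = q)
    (hn : Module.finrank F V = n)
    {E : Type*} [NormedAddCommGroup E] [InnerProductSpace ℝ E]
    (shat : {s : Submodule F V // Module.finrank F s = 1} → E)
    (hspan : Submodule.span ℝ (Set.range shat) = ⊤)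
    (hnorm : ∀ s, ‖shat s‖ ^ 2 = gaussR q n - 1)
    (hinner : ∀ s t, s ≠ t → (inner ℝ (shat s) (shat t) : ℝ) = -1)
    (hsum : ∑ᶠ s, shat s = 0)
    (u v : Submodule F V) {i j h : ℕ}
    (hu : Module.finrank F u = i) (hv : Module.finrank F v = j)
    (huv : Module.finrank F (u ⊓ v : Submodule F V) = h) :
    (inner ℝ (uhat shat u) (uhat shat v) : ℝ)
      = gaussR q n * gaussR q h - gaussR q i * gaussR q j := by
  classical
  have : Finite V := Module.finite_of_finite F
  have : Finite (Submodule F V) :=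
    Finite.of_injective (fun s : Submodule F V => (s : Set V)) SetLike.coe_injective
  letI : Fintype {s : Submodule F V // Module.finrank F ↥s = 1} := Fintype.ofFinite _
  have hq2 : 1 < q := hq ▸ Fintype.one_lt_card
  have hq1 : (q : ℝ) - 1 ≠ 0 := by
    have : (1 : ℝ) < q := by exact_mod_cast hq2
    linarith
  -- the cardinality of the set of lines in a subspace, as a real number
  have key : ∀ w : Submodule F V,
      ((Finset.univ.filter
        (fun s : {s : Submodule F V // Module.finrank F ↥s = 1} => s.1 ≤ w)).card : ℝ)
        = gaussR q (Module.finrank F ↥w) := by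
    intro w
    have h1 := aux_card_lines (F := F) (V := V) w
    rw [hq] at h1
    have h2 : Nat.card {s : Submodule F V // Module.finrank F ↥s = 1 ∧ s ≤ w}
        = (Finset.univ.filter
          (fun s : {s : Submodule F V // Module.finrank F ↥s = 1} => s.1 ≤ w)).card := by
      rw [← Fintype.card_subtype, ← Nat.card_eq_fintype_card]
      exact Nat.card_congr (Equiv.subtypeSubtypeEquivSubtypeInter _ _).symm
    rw [h2] at h1
    have h3 := congrArg (Nat.cast (R := ℝ)) h1
    rw [Nat.cast_mul, Nat.cast_sub (by omega), Nat.cast_sub (Nat.one_le_pow _ _ (by omega))] at h3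
    push_cast at h3
    rw [gaussR, ← h3]
    field_simp
  -- rewrite uhat as a Finset sum
  have huhat : ∀ w : Submodule F V, uhat shat w
      = ∑ s ∈ Finset.univ.filter
          (fun s : {s : Submodule F V // Module.finrank F ↥s = 1} => s.1 ≤ w), shat s := by
    intro w
    rw [uhat]
    have : ∀ s : {s : Submodule F V // Module.finrank F ↥s = 1},
        (∑ᶠ (_ : s.1 ≤ w), shat s) = if s.1 ≤ w then shat s else 0 := fun s => finsum_eq_if
    rw [finsum_congr this, finsum_eq_sum_of_fintype, Finset.sum_filter]
  set A := Finset.univ.filter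
      (fun s : {s : Submodule F V // Module.finrank F ↥s = 1} => s.1 ≤ u) with hA
  set B := Finset.univ.filter
      (fun s : {s : Submodule F V // Module.finrank F ↥s = 1} => s.1 ≤ v) with hB
  have hAB : A ∩ B = Finset.univ.filter
      (fun s : {s : Submodule F V // Module.finrank F ↥s = 1} => s.1 ≤ u ⊓ v) := by
    ext s
    simp [hA, hB, le_inf_iff]
  have hst : ∀ s t : {s : Submodule F V // Module.finrank F ↥s = 1},
      (inner ℝ (shat s) (shat t) : ℝ) = (if t = s then gaussR q n else 0) - 1 := by
    intro s t
    by_cases hts : t = s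
    · subst hts
      rw [real_inner_self_eq_norm_sq, hnorm]
      simp
    · rw [hinner s t (Ne.symm hts), if_neg hts]
      ring
  rw [huhat u, huhat v, sum_inner]
  simp_rw [inner_sum, hst]
  rw [Finset.sum_congr rfl (fun s _ => Finset.sum_sub_distrib _ _)]
  simp_rw [Finset.sum_ite_eq', Finset.sum_const, nsmul_eq_mul, mul_one]
  rw [Finset.sum_sub_distrib, Finset.sum_ite_mem, Finset.sum_const, Finset.sum_const,
    nsmul_eq_mul, nsmul_eq_mul, hAB]
  have h1 := key u; have h2 := key v; have h3 := key (u ⊓ v)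
  rw [hu] at h1; rw [hv] at h2; rw [huv] at h3
  rw [← hA] at h1; rw [← hB] at h2
  push_cast
  rw [h1, h2, h3]
  ring
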